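/- Given the identities R_n = α_n - 2n - 1 - α, r_n + r_{n+1} = t - α_n R_n, r_n² - t r_n = β_n R_n R_{n-1}, nt - (2n+α) r_n = β_n(R_n + R_{n-1}), and n(n+α) + r_n + ∑_{j=0}^{n-1} R_j = β_n, the recurrence coefficients satisfy the first-order difference equation: α t + 2β_n(α_n + α_{n-1}) + (2n+α)[α_n(2n+2+α-α_n) - 3β_n - β_{n+1}] = 0. -/

import Mathlib

/-- Given the ladder-operator identities for the weight `x^α e^{-x-t/x}`, the recurrence
coefficients satisfy the first-order difference equation
`α t + 2β_n(α_n + α_{n-1}) + (2n+α)[α_n(2n+2+α-α_n) - 3β_n - β_{n+1}] = 0`. -/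
theorem first_order_difference_equation_one
    (α t : ℝ) (hα : α > -1) (ht : t ≥ 0)
    (a b R r : ℕ → ℝ)
    (hR : ∀ n : ℕ, R n = a n - 2 * n - 1 - α)
    (hrr : ∀ n : ℕ, r n + r (n + 1) = t - a n * R n)
    (hr2 : ∀ n : ℕ, 1 ≤ n → (r n) ^ 2 - t * r n = b n * R n * R (n - 1))
    (hnt : ∀ n : ℕ, 1 ≤ n → (n : ℝ) * t - (2 * n + α) * r n = b n * (R n + R (n - 1)))
    (hsum : ∀ n : ℕ, (n : ℝ) * (n + α) + r n + ∑ j ∈ Finset.range n, R j = b n) :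
    ∀ n : ℕ, 1 ≤ n →
      α * t + 2 * b n * (a n + a (n - 1))
        + (2 * n + α) * (a n * (2 * n + 2 + α - a n) - 3 * b n - b (n + 1)) = 0 := by
  intro n hn
  obtain ⟨m, rfl⟩ : ∃ m, n = m + 1 := ⟨n - 1, by omega⟩
  have e1 := hR (m + 1)
  have e2 := hR m
  have e3 := hrr (m + 1)
  have e4 := hnt (m + 1) (by omega)
  have e5 := hsum (m + 1)
  have e6 := hsum (m + 2)
  rw [Finset.sum_range_succ] at e6
  simp only [Nat.add_sub_cancel]
  push_cast at e1 e2 e3 e4 e5 e6 ⊢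
  linear_combination ((2 * (m : ℝ) + 2 + α) * (a (m + 1) - 1) - 2 * b (m + 1)) * e1
    - 2 * b (m + 1) * e2 - (2 * (m : ℝ) + 2 + α) * e3 - 2 * e4
    - (2 * (m : ℝ) + 2 + α) * e5 + (2 * (m : ℝ) + 2 + α) * e6
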